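/- arXiv:1512.02161 — 2 statements merged into one kernel-verified Lean document; each statement's English description precedes it below -/
import Mathlib

section
/- Let n ≥ 1, let d_1 ≤ d_2 ≤ ... ≤ d_k be positive integers with d_1 + ... + d_k = n(n+1)/2, and let G be the reduced bipartite graph with degree sequence (d_1,...,d_k). If the edge set of G can be partitioned into subgraphs F_1,...,F_n such that F_i has exactly i edges and each F_i is a star forest with centers in X, then ∑_{i=0}^{t-1} d_{k-i} ≥ ∑_{i=0}^{t-1} (n-i) for every t with 1 ≤ t ≤ k. -/
open Finset

/-- The degree in the bipartite edge set `E` of a vertex `x` of the part `X = Fin k`. -/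
def Xdeg {k m : ℕ} (E : Finset (Fin k × Fin m)) (x : Fin k) : ℕ :=
  (E.filter fun e => e.1 = x).card

/-- The degree in the bipartite edge set `E` of a vertex `y` of the part `Y = Fin m`. -/
def Ydeg {k m : ℕ} (E : Finset (Fin k × Fin m)) (y : Fin m) : ℕ :=
  (E.filter fun e => e.2 = y).card

/-- A star forest with centers in `X`: every vertex of `Y` has degree at most one. -/
def IsStarForest {k m : ℕ} (F : Finset (Fin k × Fin m)) : Prop :=
  ∀ y : Fin m, Ydeg F y ≤ 1

/-- The simple graph on the vertex set `Fin k ⊕ Fin m` determined by a set of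
bipartite edges. -/
def toGraph {k m : ℕ} (F : Finset (Fin k × Fin m)) : SimpleGraph (Fin k ⊕ Fin m) where
  Adj u v := (∃ x y, u = Sum.inl x ∧ v = Sum.inr y ∧ (x, y) ∈ F) ∨
             (∃ x y, v = Sum.inl x ∧ u = Sum.inr y ∧ (x, y) ∈ F)
  symm := ⟨fun _ _ h => Or.symm h⟩
  loopless := ⟨by
    rintro u (⟨x, y, rfl, h, -⟩ | ⟨x, y, rfl, h, -⟩) <;> cases h⟩

/-- `F` is isomorphic to a subgraph of `F'`: there is an injective map of vertices
carrying edges to edges. -/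
def IsoToSubgraph {k m k' m' : ℕ} (F : Finset (Fin k × Fin m))
    (F' : Finset (Fin k' × Fin m')) : Prop :=
  ∃ f : Fin k ⊕ Fin m → Fin k' ⊕ Fin m',
    Function.Injective f ∧ ∀ u v, (toGraph F).Adj u v → (toGraph F').Adj (f u) (f v)

/-- `c ⪯ c'` : after reordering the components of each vector in nondecreasing order,
each component of `c` is at most the corresponding component of `c'`. -/
def Prec {k : ℕ} (c c' : Fin k → ℕ) : Prop :=
  ∀ i : Fin k, c (Tuple.sort c i) ≤ c' (Tuple.sort c' i)

/-- A star-forest ascending subgraph decomposition of the edge set `E`: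
the `F i` partition `E`, `F i` has `i + 1` edges (`1`-based: `i` edges),
every `F i` is a star forest with centers in `X`, and each `F i` is isomorphic
to a subgraph of the next one. -/
def StarForestASD {k m n : ℕ} (E : Finset (Fin k × Fin m))
    (F : Fin n → Finset (Fin k × Fin m)) : Prop :=
  (∀ i j, i ≠ j → Disjoint (F i) (F j)) ∧
  Finset.univ.biUnion F = E ∧
  (∀ i, (F i).card = (i : ℕ) + 1) ∧
  (∀ i, IsStarForest (F i)) ∧
  ∀ j : ℕ, (h : j + 1 < n) → IsoToSubgraph (F ⟨j, Nat.lt_of_succ_lt h⟩) (F ⟨j + 1, h⟩)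

/-- The reduced bipartite graph with (1-based) degree sequence `d 1 ≤ ⋯ ≤ d k`:
`x i` is adjacent exactly to `y 1, …, y (d i)`. -/
def reducedEdges (k : ℕ) (d : ℕ → ℕ) : Finset (Fin k × Fin (d k)) :=
  Finset.univ.filter fun e => (e.2 : ℕ) + 1 ≤ d ((e.1 : ℕ) + 1)

/-- The columns of `A` satisfy `A_1 ⪯ A_2 ⪯ ⋯ ⪯ A_n`. -/
def AscendingCols {k n : ℕ} (A : Matrix (Fin k) (Fin n) ℕ) : Prop :=
  ∀ j : ℕ, (h : j + 1 < n) →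
    Prec (fun i => A i ⟨j, Nat.lt_of_succ_lt h⟩) (fun i => A i ⟨j + 1, h⟩)

/-- A sequential coloring of the bipartite multigraph encoded by the matrix `A`:
the parallel edge class joining `x i` and `z j` receives the set `S i j` of colors,
the coloring is proper, and the edges at `x i` receive exactly colors `{1, …, d i}`. -/
def SeqColoring {k n : ℕ} (A : Matrix (Fin k) (Fin n) ℕ) (d : Fin k → ℕ)
    (S : Fin k → Fin n → Finset ℕ) : Prop :=
  (∀ i j, (S i j).card = A i j) ∧
  (∀ j : Fin n, ∀ i i' : Fin k, i ≠ i' → Disjoint (S i j) (S i' j)) ∧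
  (∀ i : Fin k, ∀ j j' : Fin n, j ≠ j' → Disjoint (S i j) (S i j')) ∧
  (∀ i : Fin k, Finset.univ.biUnion (fun j => S i j) = Finset.Icc 1 (d i))

lemma aux_sum_ineq (n t D : ℕ) :
    ∑ i ∈ Finset.range t, (n - i) ≤ t * D + ∑ i ∈ Finset.range n, (i + 1 - D) := by
  have h1 : ∑ i ∈ Finset.range n, (i + 1 - D) = ∑ i ∈ Finset.range n, (n - i - D) := by
    rw [← Finset.sum_range_reflect (fun i => i + 1 - D) n]
    refine Finset.sum_congr rfl fun i hi => ?_
    simp only [Finset.mem_range] at hi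
    omega
  rw [h1]
  calc ∑ i ∈ Finset.range t, (n - i)
      ≤ ∑ i ∈ Finset.range t, (D + (n - i - D)) :=
        Finset.sum_le_sum (fun i _ => by omega)
    _ = t * D + ∑ i ∈ Finset.range t, (n - i - D) := by
        rw [Finset.sum_add_distrib, Finset.sum_const, Finset.card_range, smul_eq_mul]
    _ ≤ t * D + ∑ i ∈ Finset.range n, (n - i - D) := by
        refine Nat.add_le_add_left (Finset.sum_le_sum_of_ne_zero fun x hx hne => ?_) _
        simp only [Finset.mem_range] at hx ⊢
        omega

/-- **Lemma (necessary condition, reduced graphs).** If the reduced bipartite graph with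
degree sequence `d 1 ≤ ⋯ ≤ d k` admits a decomposition into star forests
`F 1, …, F n` with centers in `X`, where `F i` has `i` edges, then
`∑_{i=0}^{t-1} d (k-i) ≥ ∑_{i=0}^{t-1} (n-i)` for every `1 ≤ t ≤ k`. -/
theorem statement2 (n k : ℕ) (hn : 1 ≤ n) (d : ℕ → ℕ)
    (hpos : ∀ i, 1 ≤ i → i ≤ k → 1 ≤ d i)
    (hmono : ∀ i j, 1 ≤ i → i ≤ j → j ≤ k → d i ≤ d j)
    (hsum : ∑ i ∈ Finset.Icc 1 k, d i = n * (n + 1) / 2)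
    (F : Fin n → Finset (Fin k × Fin (d k)))
    (hdisj : ∀ i j, i ≠ j → Disjoint (F i) (F j))
    (hunion : Finset.univ.biUnion F = reducedEdges k d)
    (hcard : ∀ i, (F i).card = (i : ℕ) + 1)
    (hstar : ∀ i, IsStarForest (F i)) :
    ∀ t : ℕ, 1 ≤ t → t ≤ k →
      ∑ i ∈ Finset.range t, (n - i) ≤ ∑ i ∈ Finset.range t, d (k - i) := by
  intro t ht htk
  set D : ℕ := if t < k then d (k - t) else 0 with hD
  have hDle : ∀ r, r < t → D ≤ d (k - r) := by
    intro r hr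
    by_cases h : t < k
    · simp only [hD, if_pos h]
      exact hmono _ _ (by omega) (by omega) (by omega)
    · simp [hD, if_neg h]
  have hDge : ∀ i, 1 ≤ i → i ≤ k - t → d i ≤ D := by
    intro i h1 h2
    have h : t < k := by omega
    simp only [hD, if_pos h]
    exact hmono _ _ h1 h2 (by omega)
  classical
  set S := (reducedEdges k d).filter (fun e => D ≤ (e.2 : ℕ)) with hS
  -- fiberwise card
  have hfiber : ∀ x : Fin k, (S.filter fun e => e.1 = x).card = d ((x : ℕ) + 1) - D := by
    intro x
    rw [← Nat.card_Ico D (d ((x : ℕ) + 1))]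
    have hdk : d ((x : ℕ) + 1) ≤ d k := hmono _ _ (by omega) (by omega) le_rfl
    apply Finset.card_bij (fun e _ => ((e.2 : ℕ) : ℕ))
    · intro e he
      simp only [hS, reducedEdges, Finset.mem_filter, Finset.mem_univ, true_and] at he
      obtain ⟨⟨h1, h2⟩, h3⟩ := he
      subst h3
      simp only [Finset.mem_Ico]
      omega
    · intro e he e' he' hval
      simp only [hS, Finset.mem_filter] at he he'
      have h1 : e.1 = x := he.2
      have h1' : e'.1 = x := he'.2
      have h2 : e.2 = e'.2 := Fin.ext hval
      exact Prod.ext (h1.trans h1'.symm) h2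
    · intro b hb
      simp only [Finset.mem_Ico] at hb
      refine ⟨(x, ⟨b, by omega⟩), ?_, rfl⟩
      refine Finset.mem_filter.2
        ⟨Finset.mem_filter.2 ⟨Finset.mem_filter.2 ⟨Finset.mem_univ _, ?_⟩, ?_⟩, rfl⟩
      · show b + 1 ≤ d ((x : ℕ) + 1)
        omega
      · show D ≤ b
        omega
  have hScard : S.card + t * D = ∑ r ∈ Finset.range t, d (k - r) := by
    have h1 : S.card = ∑ x : Fin k, (S.filter fun e => e.1 = x).card :=
      Finset.card_eq_sum_card_fiberwise (fun e _ => Finset.mem_univ _)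
    have h2 : S.card = ∑ i ∈ Finset.range k, (d (i + 1) - D) := by
      rw [h1]
      rw [← Fin.sum_univ_eq_sum_range (fun i => d (i + 1) - D) k]
      exact Finset.sum_congr rfl fun x _ => hfiber x
    have h3 : ∑ i ∈ Finset.range k, (d (i + 1) - D) = ∑ r ∈ Finset.range t, (d (k - r) - D) := by
      rw [← Finset.sum_range_reflect (fun i => d (i + 1) - D) k]
      have h4 : ∑ j ∈ Finset.range k, (d (k - 1 - j + 1) - D)
          = ∑ j ∈ Finset.range k, (d (k - j) - D) := by
        refine Finset.sum_congr rfl fun j hj => ?_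
        simp only [Finset.mem_range] at hj
        have : k - 1 - j + 1 = k - j := by omega
        rw [this]
      rw [h4]
      rw [← Finset.sum_range_add_sum_Ico (fun j => d (k - j) - D) (show t ≤ k from htk)]
      have h5 : ∑ j ∈ Finset.Ico t k, (d (k - j) - D) = 0 := by
        refine Finset.sum_eq_zero fun j hj => ?_
        simp only [Finset.mem_Ico] at hj
        have := hDge (k - j) (by omega) (by omega)
        omega
      omega
    rw [h2, h3]
    have h6 : ∑ r ∈ Finset.range t, (d (k - r) - D) + t * D
        = ∑ r ∈ Finset.range t, ((d (k - r) - D) + D) := by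
      rw [Finset.sum_add_distrib, Finset.sum_const, Finset.card_range, smul_eq_mul]
    rw [h6]
    refine Finset.sum_congr rfl fun r hr => ?_
    simp only [Finset.mem_range] at hr
    have := hDle r hr
    omega
  -- per-forest lower bound
  have hsnd_inj : ∀ i : Fin n, ∀ e ∈ F i, ∀ e' ∈ F i, e.2 = e'.2 → e = e' := by
    intro i e he e' he' h2
    by_contra hne
    have h1 : e ∈ (F i).filter (fun x => x.2 = e.2) := Finset.mem_filter.2 ⟨he, rfl⟩
    have h1' : e' ∈ (F i).filter (fun x => x.2 = e.2) := Finset.mem_filter.2 ⟨he', h2.symm⟩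
    have hlt : 1 < ((F i).filter (fun x => x.2 = e.2)).card :=
      Finset.one_lt_card.2 ⟨e, h1, e', h1', hne⟩
    have hle : Ydeg (F i) e.2 ≤ 1 := hstar i e.2
    unfold Ydeg at hle
    omega
  have hforest : ∀ i : Fin n, (i : ℕ) + 1 - D ≤ ((F i).filter fun e => D ≤ (e.2 : ℕ)).card := by
    intro i
    have hsplit := Finset.card_filter_add_card_filter_not
      (s := F i) (p := fun e => D ≤ (e.2 : ℕ))
    have hbad : ((F i).filter fun e => ¬ D ≤ (e.2 : ℕ)).card ≤ D := by
      have := Finset.card_le_card_of_injOn (f := fun e => ((e.2 : ℕ) : ℕ))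
        (s := (F i).filter fun e => ¬ D ≤ (e.2 : ℕ)) (t := Finset.range D)
        (fun e he => by
          simp only [Finset.coe_filter, Set.mem_setOf_eq, Finset.mem_coe, Finset.mem_filter] at he
          simp only [Finset.coe_range, Set.mem_Iio, Finset.mem_coe, Finset.mem_range]
          omega)
        (fun e he e' he' hval => by
          simp only [Finset.coe_filter, Set.mem_setOf_eq] at he he'
          exact hsnd_inj i e he.1 e' he'.1 (Fin.ext hval))
      simpa using this
    have := hcard i
    omega
  have hSsum : ∑ i ∈ Finset.range n, (i + 1 - D) ≤ S.card := by
    have hrw : S = Finset.univ.biUnion (fun i : Fin n => (F i).filter fun e => D ≤ (e.2 : ℕ)) := by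
      rw [hS, ← hunion, Finset.filter_biUnion]
    rw [hrw, Finset.card_biUnion (fun a _ b _ hab =>
      Finset.disjoint_filter_filter (hdisj a b hab))]
    rw [← Fin.sum_univ_eq_sum_range (fun i => i + 1 - D) n]
    exact Finset.sum_le_sum fun i _ => hforest i
  calc ∑ i ∈ Finset.range t, (n - i)
      ≤ t * D + ∑ i ∈ Finset.range n, (i + 1 - D) := aux_sum_ineq n t D
    _ ≤ t * D + S.card := Nat.add_le_add_left hSsum _
    _ = S.card + t * D := Nat.add_comm _ _
    _ = ∑ r ∈ Finset.range t, d (k - r) := hScard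
end

section
/- Let G be a bipartite graph with parts A = {a_1,...,a_k} and B, let d_i be the degree of a_i in G, and let G_R be the reduced bipartite graph of G, with parts A and Y' = {y'_1,...,y'_{max d}}, where a_i is adjacent in G_R exactly to y'_1,...,y'_{d_i}. Suppose the edge set of G_R is partitioned into subgraphs F'_1,...,F'_t, each a star forest with centers in A. Then the edge set of G can be partitioned into subgraphs F_1,...,F_t, each a star forest with centers in A, such that for every i ∈ {1,...,t} and every j ∈ {1,...,k} the degree of a_j in F_i equals the degree of a_j in F'_i (in particular, F_i is isomorphic to F'_i for each i). -/
open Finset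

/-- Kernel existence for the "Galvin" conflict digraph: cells conflict when they share
a row or a color; a cell is absorbed by a same-row cell at a higher position or a
same-color cell at a lower position.  Constructed via a Gale–Shapley style fixpoint. -/
lemma kernel_exists {α : Type*} [DecidableEq α] (U : Finset α)
    (row col pos : α → ℕ)
    (hrp : ∀ e ∈ U, ∀ f ∈ U, row e = row f → pos e = pos f → e = f)
    (hcp : ∀ e ∈ U, ∀ f ∈ U, col e = col f → pos e = pos f → e = f) :
    ∃ K, K ⊆ U ∧ (∀ e ∈ K, ∀ f ∈ K, e ≠ f → row e ≠ row f ∧ col e ≠ col f) ∧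
      ∀ e ∈ U, e ∉ K → ∃ f ∈ K,
        (row f = row e ∧ pos e < pos f) ∨ (col f = col e ∧ pos f < pos e) := by
  classical
  -- proposals w.r.t. a rejected set R
  let P : Finset α → Finset α := fun R =>
    U.filter (fun e => e ∉ R ∧ ∀ f ∈ U, row f = row e → pos e < pos f → f ∈ R)
  -- newly rejected proposals
  let Δ : Finset α → Finset α := fun R =>
    (P R).filter (fun e => ∃ f ∈ P R, col f = col e ∧ pos f < pos e)
  let step : Finset α → Finset α := fun R => R ∪ Δ R
  let I : Finset α → Prop := fun R => ∀ e ∈ R, ∃ e' ∈ P R, col e' = col e ∧ pos e' < pos e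
  have hPU : ∀ R, P R ⊆ U := fun R => filter_subset _ _
  have hPnotR : ∀ R, ∀ e ∈ P R, e ∉ R := by
    intro R e he; exact ((mem_filter.mp he).2).1
  have hPabove : ∀ R, ∀ e ∈ P R, ∀ f ∈ U, row f = row e → pos e < pos f → f ∈ R := by
    intro R e he; exact ((mem_filter.mp he).2).2
  -- invariant is preserved by `step`
  have hIstep : ∀ R, I R → I (step R) := by
    intro R hI e he
    -- the minimal-position proposal of the color of e
    have hBne : ∃ b, (b ∈ P R ∧ col b = col e) ∧
        (∀ g, (g ∈ P R ∧ col g = col e) → pos b ≤ pos g) ∧ pos b < pos e := by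
      have hcase : ∃ w ∈ P R, col w = col e ∧ pos w < pos e := by
        rcases mem_union.mp he with he1 | he2
        · rcases hI e he1 with ⟨e', he', hc, hp⟩; exact ⟨e', he', hc, hp⟩
        · rcases mem_filter.mp he2 with ⟨heP, f, hfP, hc, hp⟩
          exact ⟨f, hfP, hc, hp⟩
      rcases hcase with ⟨w, hwP, hwc, hwp⟩
      have hne : ((P R).filter (fun g => col g = col e)).Nonempty :=
        ⟨w, mem_filter.mpr ⟨hwP, hwc⟩⟩
      rcases Finset.exists_min_image _ pos hne with ⟨b, hb, hbmin⟩
      rcases mem_filter.mp hb with ⟨hbP, hbc⟩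
      refine ⟨b, ⟨hbP, hbc⟩, ?_, ?_⟩
      · intro g hg; exact hbmin g (mem_filter.mpr hg)
      · exact lt_of_le_of_lt (hbmin w (mem_filter.mpr ⟨hwP, hwc⟩)) hwp
    rcases hBne with ⟨b, ⟨hbP, hbc⟩, hbmin, hbe⟩
    refine ⟨b, ?_, hbc, hbe⟩
    -- b is still a proposal w.r.t. step R
    have hbU : b ∈ U := hPU R hbP
    have hbnotΔ : b ∉ Δ R := by
      intro hbΔ
      rcases mem_filter.mp hbΔ with ⟨-, g, hgP, hgc, hgp⟩
      exact absurd (hbmin g ⟨hgP, hgc.trans hbc⟩) (not_le.mpr hgp)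
    refine mem_filter.mpr ⟨hbU, ?_, ?_⟩
    · intro hbR
      rcases mem_union.mp hbR with h1 | h2
      · exact hPnotR R b hbP h1
      · exact hbnotΔ h2
    · intro f hf hrf hpf
      exact mem_union.mpr (Or.inl (hPabove R b hbP f hf hrf hpf))
  -- reach a fixpoint
  have hsub : ∀ R, R ⊆ step R := fun R => subset_union_left
  have hstepU : ∀ R, R ⊆ U → step R ⊆ U := by
    intro R hR
    exact union_subset hR ((filter_subset _ _).trans (hPU R))
  have hiter : ∀ n : ℕ, (step^[n] ∅ ⊆ U ∧ I (step^[n] ∅)) ∧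
      (step (step^[n] ∅) = step^[n] ∅ ∨ n ≤ (step^[n] ∅).card) := by
    intro n
    induction n with
    | zero =>
      constructor
      · constructor
        · simp
        · intro e he; simp at he
      · right; omega
    | succ n ih =>
      obtain ⟨⟨hU', hI'⟩, hd⟩ := ih
      have hsucc : step^[n+1] ∅ = step (step^[n] ∅) := Function.iterate_succ_apply' step n ∅
      constructor
      · rw [hsucc]
        exact ⟨hstepU _ hU', hIstep _ hI'⟩
      · rcases hd with hfix | hcard
        · left; rw [hsucc, hfix, hfix]
        · by_cases hfix : step (step^[n] ∅) = step^[n] ∅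
          · left; rw [hsucc, hfix, hfix]
          · right
            rw [hsucc]
            have hss : step^[n] ∅ ⊂ step (step^[n] ∅) :=
              Finset.ssubset_iff_subset_ne.mpr ⟨hsub _, fun h => hfix h.symm⟩
            have := Finset.card_lt_card hss
            omega
  -- take the fixpoint
  obtain ⟨⟨hRU, hRI⟩, hd⟩ := hiter (U.card + 1)
  set R : Finset α := step^[U.card + 1] ∅ with hRdef
  have hfix : step R = R := by
    rcases hd with h | h
    · exact h
    · exfalso; have := Finset.card_le_card hRU; omega
  have hΔempty : ∀ e ∈ P R, ¬∃ f ∈ P R, col f = col e ∧ pos f < pos e := by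
    intro e heP ⟨f, hfP, hfc, hfp⟩
    have heΔ : e ∈ Δ R := mem_filter.mpr ⟨heP, f, hfP, hfc, hfp⟩
    have heR : e ∈ R := by
      rw [← hfix]; exact mem_union.mpr (Or.inr heΔ)
    exact hPnotR R e heP heR
  refine ⟨P R, hPU R, ?_, ?_⟩
  · -- independence
    intro e he f hf hef
    constructor
    · intro hr
      have hpe : pos e ≠ pos f := by
        intro hp
        exact hef (hrp e (hPU R he) f (hPU R hf) hr hp)
      rcases lt_or_gt_of_ne hpe with h | h
      · exact hPnotR R f hf (hPabove R e he f (hPU R hf) hr.symm h)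
      · exact hPnotR R e he (hPabove R f hf e (hPU R he) hr h)
    · intro hc
      have hpe : pos e ≠ pos f := by
        intro hp
        exact hef (hcp e (hPU R he) f (hPU R hf) hc hp)
      rcases lt_or_gt_of_ne hpe with h | h
      · exact hΔempty f hf ⟨e, he, hc, h⟩
      · exact hΔempty e he ⟨f, hf, hc.symm, h⟩
  · -- absorption
    intro e heU heK
    by_cases heR : e ∈ R
    · rcases hRI e heR with ⟨e', he'P, hc, hp⟩
      exact ⟨e', he'P, Or.inr ⟨hc, hp⟩⟩
    · -- e is not a proposal although unrejected: some row-sibling above is unrejected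
      have : ¬(e ∉ R ∧ ∀ f ∈ U, row f = row e → pos e < pos f → f ∈ R) := by
        intro hcon
        exact heK (mem_filter.mpr ⟨heU, hcon⟩)
      push_neg at this
      rcases this heR with ⟨f, hfU, hfr, hfp, hfR⟩
      have hTne : (U.filter (fun g => row g = row e ∧ g ∉ R ∧ pos e < pos g)).Nonempty :=
        ⟨f, mem_filter.mpr ⟨hfU, hfr, hfR, hfp⟩⟩
      rcases Finset.exists_max_image _ pos hTne with ⟨b, hb, hbmax⟩
      rcases mem_filter.mp hb with ⟨hbU, hbr, hbR, hbp⟩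
      refine ⟨b, ?_, Or.inl ⟨hbr, hbp⟩⟩
      refine mem_filter.mpr ⟨hbU, hbR, ?_⟩
      intro g hgU hgr hgp
      by_contra hgR
      have : g ∈ U.filter (fun g => row g = row e ∧ g ∉ R ∧ pos e < pos g) :=
        mem_filter.mpr ⟨hgU, hgr.trans hbr, hgR, hbp.trans hgp⟩
      exact absurd (hbmax g this) (not_le.mpr hgp)


/-- Galvin-style list colouring: assign to every cell `e` of `W` a colour `Y e ∈ S`
admissible for `e` (i.e. `(e.1, Y e) ∈ G`), such that cells sharing a row or sharing
a `colr`-class get distinct colours; possible as soon as every cell has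
(row-cells above) + (colr-cells below) + 1 many admissible colours. -/
lemma build {k m D t : ℕ} (G : Finset (Fin k × Fin m)) (colr : Fin k × Fin D → Fin t)
    (y₀ : Fin m) :
    ∀ (n : ℕ) (S : Finset (Fin m)) (W : Finset (Fin k × Fin D)), S.card = n →
    (∀ e ∈ W, ∀ f ∈ W, colr e = colr f → e.2 = f.2 → e = f) →
    (∀ e ∈ W,
      (W.filter (fun f => f.1 = e.1 ∧ (e.2 : ℕ) < (f.2 : ℕ))).card
        + (W.filter (fun f => colr f = colr e ∧ (f.2 : ℕ) < (e.2 : ℕ))).card + 1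
        ≤ ((univ.filter (fun y => (e.1, y) ∈ G)) ∩ S).card) →
    ∃ Y : Fin k × Fin D → Fin m,
      (∀ e ∈ W, (e.1, Y e) ∈ G ∧ Y e ∈ S) ∧
      (∀ e ∈ W, ∀ f ∈ W, e ≠ f → (e.1 = f.1 ∨ colr e = colr f) → Y e ≠ Y f) := by
  intro n
  induction n with
  | zero =>
    intro S W hcard hinj hinv
    have hS : S = ∅ := card_eq_zero.mp hcard
    have hW : W = ∅ := by
      apply eq_empty_of_forall_notMem
      intro e he
      have := hinv e he
      rw [hS] at this
      simp at this
    refine ⟨fun _ => y₀, ?_, ?_⟩ <;> intro e he <;> rw [hW] at he <;> simp at he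
  | succ n ih =>
    intro S W hcard hinj hinv
    have hSne : S.Nonempty := card_pos.mp (by omega)
    obtain ⟨y, hy⟩ := hSne
    classical
    set U : Finset (Fin k × Fin D) := W.filter (fun e => (e.1, y) ∈ G) with hU
    have hUW : U ⊆ W := filter_subset _ _
    obtain ⟨K, hKU, hKind, hKabs⟩ :=
      kernel_exists U (fun e => (e.1 : ℕ)) (fun e => (colr e : ℕ)) (fun e => (e.2 : ℕ))
        (by
          intro e _ f _ h1 h2
          exact Prod.ext (Fin.val_injective h1) (Fin.val_injective h2))
        (by
          intro e heU f hfU h1 h2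
          exact hinj e (hUW heU) f (hUW hfU) (Fin.val_injective h1) (Fin.val_injective h2))
    set W' : Finset (Fin k × Fin D) := W \ K with hW'
    set S' : Finset (Fin m) := S.erase y with hS'
    have hW'W : W' ⊆ W := sdiff_subset
    have hKW : K ⊆ W := hKU.trans hUW
    -- the invariant for (S', W')
    have hinj' : ∀ e ∈ W', ∀ f ∈ W', colr e = colr f → e.2 = f.2 → e = f :=
      fun e he f hf => hinj e (hW'W he) f (hW'W hf)
    have hinv' : ∀ e ∈ W',
        (W'.filter (fun f => f.1 = e.1 ∧ (e.2 : ℕ) < (f.2 : ℕ))).card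
          + (W'.filter (fun f => colr f = colr e ∧ (f.2 : ℕ) < (e.2 : ℕ))).card + 1
          ≤ ((univ.filter (fun z => (e.1, z) ∈ G)) ∩ S').card := by
      intro e he
      have heW : e ∈ W := hW'W he
      have heK : e ∉ K := (mem_sdiff.mp he).2
      have hA' : W'.filter (fun f => f.1 = e.1 ∧ (e.2 : ℕ) < (f.2 : ℕ)) ⊆
          W.filter (fun f => f.1 = e.1 ∧ (e.2 : ℕ) < (f.2 : ℕ)) :=
        filter_subset_filter _ hW'W
      have hB' : W'.filter (fun f => colr f = colr e ∧ (f.2 : ℕ) < (e.2 : ℕ)) ⊆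
          W.filter (fun f => colr f = colr e ∧ (f.2 : ℕ) < (e.2 : ℕ)) :=
        filter_subset_filter _ hW'W
      have hbase := hinv e heW
      by_cases heU : e ∈ U
      · -- e loses the colour y but also an out-neighbour
        have hyN : y ∈ univ.filter (fun z => (e.1, z) ∈ G) := by
          simp only [mem_filter, mem_univ, true_and]
          exact (mem_filter.mp heU).2
        have hyNS : y ∈ (univ.filter (fun z => (e.1, z) ∈ G)) ∩ S :=
          mem_inter.mpr ⟨hyN, hy⟩
        have hcardNS' : ((univ.filter (fun z => (e.1, z) ∈ G)) ∩ S').card + 1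
            = ((univ.filter (fun z => (e.1, z) ∈ G)) ∩ S).card := by
          rw [hS', inter_erase, card_erase_add_one hyNS]
        obtain ⟨f, hfK, hfcase⟩ := hKabs e heU heK
        have hfW : f ∈ W := hKW hfK
        rcases hfcase with ⟨hr, hp⟩ | ⟨hc, hp⟩
        · -- f is a row-cell above e
          have hfA : f ∈ W.filter (fun f => f.1 = e.1 ∧ (e.2 : ℕ) < (f.2 : ℕ)) :=
            mem_filter.mpr ⟨hfW, Fin.val_injective hr, hp⟩
          have hsub : W'.filter (fun f => f.1 = e.1 ∧ (e.2 : ℕ) < (f.2 : ℕ)) ⊆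
              (W.filter (fun f => f.1 = e.1 ∧ (e.2 : ℕ) < (f.2 : ℕ))).erase f := by
            intro g hg
            refine mem_erase.mpr ⟨?_, hA' hg⟩
            intro hgf
            have : g ∉ K := (mem_sdiff.mp (mem_filter.mp hg).1).2
            exact this (hgf ▸ hfK)
          have h1 := card_le_card hsub
          have h1' := card_erase_add_one hfA
          have h2 := card_le_card hB'
          omega
        · -- f is a colr-cell below e
          have hfB : f ∈ W.filter (fun f => colr f = colr e ∧ (f.2 : ℕ) < (e.2 : ℕ)) :=
            mem_filter.mpr ⟨hfW, Fin.val_injective hc, hp⟩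
          have hsub : W'.filter (fun f => colr f = colr e ∧ (f.2 : ℕ) < (e.2 : ℕ)) ⊆
              (W.filter (fun f => colr f = colr e ∧ (f.2 : ℕ) < (e.2 : ℕ))).erase f := by
            intro g hg
            refine mem_erase.mpr ⟨?_, hB' hg⟩
            intro hgf
            have : g ∉ K := (mem_sdiff.mp (mem_filter.mp hg).1).2
            exact this (hgf ▸ hfK)
          have h1 := card_le_card hsub
          have h1' := card_erase_add_one hfB
          have h2 := card_le_card hA'
          omega
      · -- y was never admissible for e
        have hyN : y ∉ (univ.filter (fun z => (e.1, z) ∈ G)) ∩ S := by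
          intro hyy
          have : (e.1, y) ∈ G := by
            have := (mem_inter.mp hyy).1
            simpa using this
          exact heU (mem_filter.mpr ⟨heW, this⟩)
        have hcardNS' : ((univ.filter (fun z => (e.1, z) ∈ G)) ∩ S').card
            = ((univ.filter (fun z => (e.1, z) ∈ G)) ∩ S).card := by
          rw [hS', inter_erase, erase_eq_of_notMem hyN]
        have h1 := card_le_card hA'
        have h2 := card_le_card hB'
        omega
    have hcard' : S'.card = n := by
      rw [hS', card_erase_of_mem hy, hcard]
      omega
    obtain ⟨Y', hY'mem, hY'inj⟩ := ih S' W' hcard' hinj' hinv'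
    refine ⟨fun e => if e ∈ K then y else Y' e, ?_, ?_⟩
    · intro e heW
      by_cases heK : e ∈ K
      · simp only [if_pos heK]
        exact ⟨(mem_filter.mp (hKU heK)).2, hy⟩
      · simp only [if_neg heK]
        have heW' : e ∈ W' := mem_sdiff.mpr ⟨heW, heK⟩
        exact ⟨(hY'mem e heW').1, mem_of_mem_erase (hY'mem e heW').2⟩
    · intro e heW f hfW hef hshare
      by_cases heK : e ∈ K <;> by_cases hfK : f ∈ K
      · exfalso
        have := hKind e heK f hfK hef
        rcases hshare with h | h
        · exact this.1 (by rw [h])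
        · exact this.2 (by rw [h])
      · simp only [if_pos heK, if_neg hfK]
        have hfW' : f ∈ W' := mem_sdiff.mpr ⟨hfW, hfK⟩
        have := (hY'mem f hfW').2
        rw [hS'] at this
        exact fun h => (ne_of_mem_erase this) h.symm
      · simp only [if_neg heK, if_pos hfK]
        have heW' : e ∈ W' := mem_sdiff.mpr ⟨heW, heK⟩
        have := (hY'mem e heW').2
        rw [hS'] at this
        exact ne_of_mem_erase this
      · simp only [if_neg heK, if_neg hfK]
        exact hY'inj e (mem_sdiff.mpr ⟨heW, heK⟩) f (mem_sdiff.mpr ⟨hfW, hfK⟩) hef hshare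

/-- **Extension Lemma.** If the reduced graph `G_R` of a bipartite graph `G` with parts
`A` and `B` admits a decomposition into star forests `F' 1, …, F' t` with centers in
`A`, then `G` admits a decomposition into star forests `F 1, …, F t` with centers in
`A` such that every `a j` has the same degree in `F i` as in `F' i`
(in particular `F i ≅ F' i`). -/

theorem statement9 (k m t : ℕ) (G : Finset (Fin k × Fin m))
    (F' : Fin t → Finset (Fin k × Fin (Finset.univ.sup (Xdeg G))))
    (hdisj' : ∀ i j, i ≠ j → Disjoint (F' i) (F' j))
    (hunion' : Finset.univ.biUnion F' =
      Finset.univ.filter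
        (fun e : Fin k × Fin (Finset.univ.sup (Xdeg G)) =>
          (e.2 : ℕ) + 1 ≤ Xdeg G e.1))
    (hstar' : ∀ i, IsStarForest (F' i)) :
    ∃ F : Fin t → Finset (Fin k × Fin m),
      (∀ i j, i ≠ j → Disjoint (F i) (F j)) ∧
      Finset.univ.biUnion F = G ∧
      (∀ i, IsStarForest (F i)) ∧
      (∀ (i : Fin t) (x : Fin k), Xdeg (F i) x = Xdeg (F' i) x) := by
  classical
  by_cases hG : G = ∅
  · -- trivial case: empty graph
    have hD : Finset.univ.sup (Xdeg G) = 0 := by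
      apply Nat.le_zero.mp
      apply Finset.sup_le
      intro x _
      simp [Xdeg, hG]
    have hF'e : ∀ i, F' i = ∅ := by
      intro i
      apply eq_empty_of_forall_notMem
      intro e _
      have := e.2.isLt
      omega
    refine ⟨fun _ => ∅, ?_, ?_, ?_, ?_⟩
    · intro i j _; exact disjoint_empty_left _
    · rw [hG]
      apply eq_empty_of_forall_notMem
      intro p hp
      obtain ⟨i, -, hpi⟩ := mem_biUnion.mp hp
      exact notMem_empty p hpi
    · intro i y; simp [Ydeg]
    · intro i x; rw [hF'e i]; simp [Xdeg]
  · -- main case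
    obtain ⟨g0, hg0⟩ := nonempty_iff_ne_empty.mpr hG
    set RE : Finset (Fin k × Fin (Finset.univ.sup (Xdeg G))) :=
      Finset.univ.filter
        (fun e : Fin k × Fin (Finset.univ.sup (Xdeg G)) =>
          (e.2 : ℕ) + 1 ≤ Xdeg G e.1) with hREdef
    have hdle : ∀ x, Xdeg G x ≤ Finset.univ.sup (Xdeg G) := fun x => Finset.le_sup (mem_univ x)
    have hex : ∀ e ∈ RE, ∃ i, e ∈ F' i := by
      intro e he
      rw [← hunion'] at he
      obtain ⟨i, -, hi⟩ := mem_biUnion.mp he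
      exact ⟨i, hi⟩
    -- Fin t is nonempty
    have hXpos : 0 < Xdeg G g0.1 :=
      card_pos.mpr ⟨g0, mem_filter.mpr ⟨hg0, rfl⟩⟩
    have hD0 : 0 < Finset.univ.sup (Xdeg G) := lt_of_lt_of_le hXpos (hdle g0.1)
    have hc0 : ((g0.1, (⟨0, hD0⟩ : Fin (Finset.univ.sup (Xdeg G))))) ∈ RE := by
      rw [hREdef]
      refine mem_filter.mpr ⟨mem_univ _, ?_⟩
      exact hXpos
    obtain ⟨i₀, -⟩ := hex _ hc0
    -- the colour of a cell
    let colr : Fin k × Fin (Finset.univ.sup (Xdeg G)) → Fin t :=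
      fun e => dite (∃ i, e ∈ F' i) (fun h => h.choose) (fun _ => i₀)
    have hcolr_spec : ∀ (e : Fin k × Fin (Finset.univ.sup (Xdeg G))) (h : ∃ i, e ∈ F' i),
        e ∈ F' (colr e) := by
      intro e h
      show e ∈ F' (dite _ _ _)
      rw [dif_pos h]
      exact h.choose_spec
    have hcolr_eq : ∀ (e : Fin k × Fin (Finset.univ.sup (Xdeg G))) (i : Fin t),
        e ∈ F' i → colr e = i := by
      intro e i hei
      have h1 : e ∈ F' (colr e) := hcolr_spec e ⟨i, hei⟩
      by_contra hne
      exact (Finset.disjoint_left.mp (hdisj' _ _ hne) h1) hei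
    have hsubRE : ∀ i, F' i ⊆ RE := by
      intro i e he
      rw [← hunion']
      exact mem_biUnion.mpr ⟨i, mem_univ i, he⟩
    -- colour-position injectivity (rainbow columns)
    have hcpos : ∀ e ∈ RE, ∀ f ∈ RE, colr e = colr f → e.2 = f.2 → e = f := by
      intro e he f hf hc hp
      have he' : e ∈ F' (colr e) := hcolr_spec e (hex e he)
      have hf' : f ∈ F' (colr e) := by rw [hc]; exact hcolr_spec f (hex f hf)
      have hcard := hstar' (colr e) e.2
      rw [Ydeg] at hcard
      exact card_le_one.mp hcard e (mem_filter.mpr ⟨he', rfl⟩) f (mem_filter.mpr ⟨hf', hp.symm⟩)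
    -- the number of G-neighbours of x is its degree
    have hNcard : ∀ x : Fin k, (univ.filter (fun y => (x, y) ∈ G)).card = Xdeg G x := by
      intro x
      rw [Xdeg]
      apply card_bij' (fun y _ => (x, y)) (fun p _ => p.2)
      · intro y hy
        exact mem_filter.mpr ⟨(mem_filter.mp hy).2, rfl⟩
      · intro p hp
        obtain ⟨hpG, hp1⟩ := mem_filter.mp hp
        refine mem_filter.mpr ⟨mem_univ _, ?_⟩
        rwa [show (x, p.2) = p from Prod.ext hp1.symm rfl]
      · intro y _; rfl
      · intro p hp
        exact Prod.ext ((mem_filter.mp hp).2).symm rfl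
    -- apply the list colouring lemma
    obtain ⟨Y, hYmem, hYinj⟩ := build G colr g0.2 (univ : Finset (Fin m)).card univ RE rfl
      (fun e he f hf => hcpos e he f hf)
      (by
        intro e he
        have hj : (e.2 : ℕ) + 1 ≤ Xdeg G e.1 := (mem_filter.mp he).2
        rw [inter_univ, hNcard]
        -- row-cells above e
        have hA : (RE.filter (fun f => f.1 = e.1 ∧ (e.2 : ℕ) < (f.2 : ℕ))).card
            ≤ (Finset.Ioo (e.2 : ℕ) (Xdeg G e.1)).card := by
          apply card_le_card_of_injOn (fun f => (f.2 : ℕ))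
          · intro f hf
            obtain ⟨hfRE, hf1, hf2⟩ := mem_filter.mp hf
            have := (mem_filter.mp hfRE).2
            rw [hf1] at this
            exact mem_Ioo.mpr ⟨hf2, by dsimp only; omega⟩
          · intro f hf g hg hfg
            simp only [coe_filter, Set.mem_setOf_eq] at hf hg
            exact Prod.ext (hf.2.1.trans hg.2.1.symm) (Fin.val_injective hfg)
        have hB : (RE.filter (fun f => colr f = colr e ∧ (f.2 : ℕ) < (e.2 : ℕ))).card
            ≤ (Finset.Iio (e.2 : ℕ)).card := by
          apply card_le_card_of_injOn (fun f => (f.2 : ℕ))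
          · intro f hf
            exact mem_Iio.mpr (mem_filter.mp hf).2.2
          · intro f hf g hg hfg
            simp only [coe_filter, Set.mem_setOf_eq] at hf hg
            exact hcpos f hf.1 g hg.1 (hf.2.1.trans hg.2.1.symm) (Fin.val_injective hfg)
        rw [Nat.card_Ioo] at hA
        rw [Nat.card_Iio] at hB
        omega)
    -- the image map is injective on RE-cells sharing a row
    have hYinj1 : ∀ e ∈ RE, ∀ f ∈ RE, (e.1, Y e) = (f.1, Y f) → e = f := by
      intro e he f hf hp
      by_contra hne
      simp only [Prod.mk.injEq] at hp
      exact hYinj e he f hf hne (Or.inl hp.1) hp.2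
    set F : Fin t → Finset (Fin k × Fin m) :=
      fun i => (F' i).image (fun e => (e.1, Y e)) with hFdef
    have hcards : ∀ i, (F i).card = (F' i).card := by
      intro i
      apply card_image_of_injOn
      intro e he f hf hp
      exact hYinj1 e (hsubRE i he) f (hsubRE i hf) hp
    have hdisj : ∀ i j, i ≠ j → Disjoint (F i) (F j) := by
      intro i j hij
      rw [disjoint_left]
      intro p hpi hpj
      obtain ⟨e, he, hpe⟩ := mem_image.mp hpi
      obtain ⟨f, hf, hpf⟩ := mem_image.mp hpj
      have hef : e = f := hYinj1 e (hsubRE i he) f (hsubRE j hf) (hpe.trans hpf.symm)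
      exact (Finset.disjoint_left.mp (hdisj' i j hij) he) (hef ▸ hf)
    refine ⟨F, hdisj, ?_, ?_, ?_⟩
    · -- the union is G
      have hsub : Finset.univ.biUnion F ⊆ G := by
        intro p hp
        obtain ⟨i, -, hpi⟩ := mem_biUnion.mp hp
        obtain ⟨e, he, hpe⟩ := mem_image.mp hpi
        rw [← hpe]
        exact (hYmem e (hsubRE i he)).1
      apply eq_of_subset_of_card_le hsub
      -- fibers of RE have cardinality Xdeg G x
      have hREfib : ∀ x : Fin k, (RE.filter (fun e => e.1 = x)).card = Xdeg G x := by
        intro x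
        rw [← card_range (Xdeg G x)]
        exact card_bij' (fun (e : Fin k × Fin (Finset.univ.sup (Xdeg G))) _ => (e.2 : ℕ))
          (fun a ha => ((x, ⟨a, lt_of_lt_of_le (mem_range.mp ha) (hdle x)⟩) :
            Fin k × Fin (Finset.univ.sup (Xdeg G))))
          (by
            intro e he
            obtain ⟨heRE, he1⟩ := mem_filter.mp he
            have := (mem_filter.mp heRE).2
            rw [he1] at this
            exact mem_range.mpr (show (e.2 : ℕ) < Xdeg G x by omega))
          (by
            intro a ha
            refine mem_filter.mpr ⟨mem_filter.mpr ⟨mem_univ _, ?_⟩, rfl⟩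
            show a + 1 ≤ Xdeg G x
            have := mem_range.mp ha
            omega)
          (by
            intro e he
            exact Prod.ext ((mem_filter.mp he).2).symm rfl)
          (by intro a _; rfl)
      have hcardRE : RE.card = G.card := by
        rw [card_eq_sum_card_fiberwise (f := fun e => e.1) (t := univ)
            (fun e _ => mem_univ e.1),
          card_eq_sum_card_fiberwise (f := fun e : Fin k × Fin m => e.1) (t := univ)
            (fun e _ => mem_univ e.1)]
        apply Finset.sum_congr rfl
        intro x _
        rw [hREfib x, Xdeg]
      have hcardU : (Finset.univ.biUnion F).card = G.card := by
        rw [card_biUnion (fun i _ j _ hij => hdisj i j hij)]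
        have h2 : (Finset.univ.biUnion F').card = RE.card := by rw [hunion']
        rw [card_biUnion (fun i _ j _ hij => hdisj' i j hij)] at h2
        calc ∑ i, (F i).card = ∑ i, (F' i).card := Finset.sum_congr rfl (fun i _ => hcards i)
          _ = RE.card := h2
          _ = G.card := hcardRE
      omega
    · -- star forests
      intro i y
      rw [Ydeg]
      simp only [hFdef]
      apply card_le_one.mpr
      intro p hp q hq
      obtain ⟨hpF, hp2⟩ := mem_filter.mp hp
      obtain ⟨hqF, hq2⟩ := mem_filter.mp hq
      obtain ⟨e, he, hpe⟩ := mem_image.mp hpF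
      obtain ⟨f, hf, hqf⟩ := mem_image.mp hqF
      have hef : e = f := by
        by_contra hne
        have hce : colr e = colr f := (hcolr_eq e i he).trans (hcolr_eq f i hf).symm
        apply hYinj e (hsubRE i he) f (hsubRE i hf) hne (Or.inr hce)
        have h1 : Y e = p.2 := by rw [← hpe]
        have h2 : Y f = q.2 := by rw [← hqf]
        rw [h1, h2, hp2, hq2]
      rw [← hpe, ← hqf, hef]
    · -- degrees agree
      intro i x
      rw [Xdeg, Xdeg]
      simp only [hFdef]
      have himg : ((F' i).image (fun e => (e.1, Y e))).filter (fun p => p.1 = x)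
          = ((F' i).filter (fun e => e.1 = x)).image (fun e => (e.1, Y e)) := by
        ext p
        simp only [mem_filter, mem_image]
        constructor
        · rintro ⟨⟨e, he, hpe⟩, h1⟩
          exact ⟨e, ⟨he, by rw [← hpe] at h1; exact h1⟩, hpe⟩
        · rintro ⟨e, ⟨he, he1⟩, hpe⟩
          exact ⟨⟨e, he, hpe⟩, by rw [← hpe]; exact he1⟩
      rw [himg]
      apply card_image_of_injOn
      intro e he f hf hp
      have he' : e ∈ F' i := (mem_filter.mp (by exact he : e ∈ (F' i).filter (fun e => e.1 = x))).1
      have hf' : f ∈ F' i := (mem_filter.mp (by exact hf : f ∈ (F' i).filter (fun e => e.1 = x))).1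
      exact hYinj1 e (hsubRE i he') f (hsubRE i hf') hp
end
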